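/- Let A be a finite non-empty subset of ℤ and let m be a positive integer. Let π_m : ℤ → ℤ/mℤ be the canonical projection. Then |A ∪ (A + m)| ≥ |A| + |π_m(A)|. -/

import Mathlib

open Finset

theorem stmt_1 (A : Finset ℤ) (hA : A.Nonempty) (m : ℕ) (hm : 0 < m) :
    A.card + (A.image (fun x : ℤ => (x : ZMod m))).card
      ≤ (A ∪ A.image (fun x => x + (m : ℤ))).card := by
  classical
  set T := A.image (fun x => x + (m : ℤ)) with hT
  have key : (A.image (fun x : ℤ => (x : ZMod m))).card ≤ (T \ A).card := by
    apply Finset.card_le_card_of_injOn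
      (fun r : ZMod m => (WithBot.unbotD 0 (A.filter (fun x : ℤ => (x : ZMod m) = r)).max) + (m : ℤ))
    · intro r hr
      simp only [Finset.mem_coe, Finset.mem_image] at hr
      beta_reduce
      obtain ⟨a, ha, rfl⟩ := hr
      set S := A.filter (fun x : ℤ => (x : ZMod m) = (a : ZMod m)) with hS
      have hne : S.Nonempty := ⟨a, by simp [hS, ha]⟩
      have hmax : S.max = (S.max' hne : WithBot ℤ) := (Finset.coe_max' hne).symm
      have hM : WithBot.unbotD 0 S.max = S.max' hne := by rw [hmax]; rfl
      have hmem : S.max' hne ∈ S := Finset.max'_mem _ _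
      rw [Finset.mem_filter] at hmem
      rw [Finset.mem_coe, Finset.mem_sdiff]
      constructor
      · exact Finset.mem_image.2 ⟨S.max' hne, hmem.1, by rw [hM]⟩
      · intro hcon
        have : S.max' hne + m ∈ S := by
          rw [Finset.mem_filter]
          refine ⟨by rwa [hM] at hcon, ?_⟩
          push_cast
          simp [hmem.2]
        have := Finset.le_max' S _ this
        omega
    · intro r hr s hs heq
      simp only [Finset.coe_image, Set.mem_image, Finset.mem_coe] at hr hs
      obtain ⟨a, ha, rfl⟩ := hr
      obtain ⟨b, hb, rfl⟩ := hs
      have hne : (A.filter (fun x : ℤ => (x : ZMod m) = (a : ZMod m))).Nonempty :=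
        ⟨a, by simp [ha]⟩
      have hne' : (A.filter (fun x : ℤ => (x : ZMod m) = (b : ZMod m))).Nonempty :=
        ⟨b, by simp [hb]⟩
      have h1 := Finset.max'_mem _ hne
      have h2 := Finset.max'_mem _ hne'
      rw [Finset.mem_filter] at h1 h2
      have e1 : WithBot.unbotD 0 (A.filter (fun x : ℤ => (x : ZMod m) = (a : ZMod m))).max
          = (A.filter _).max' hne := by
        rw [← Finset.coe_max' hne]; rfl
      have e2 : WithBot.unbotD 0 (A.filter (fun x : ℤ => (x : ZMod m) = (b : ZMod m))).max
          = (A.filter _).max' hne' := by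
        rw [← Finset.coe_max' hne']; rfl
      simp only at heq
      rw [e1, e2] at heq
      have : ((A.filter (fun x : ℤ => (x : ZMod m) = (a : ZMod m))).max' hne : ZMod m)
          = ((A.filter (fun x : ℤ => (x : ZMod m) = (b : ZMod m))).max' hne' : ZMod m) := by
        have := congrArg (fun z : ℤ => (z : ZMod m)) heq
        simpa using this
      rw [h1.2, h2.2] at this
      exact this
  calc A.card + (A.image (fun x : ℤ => (x : ZMod m))).card
      ≤ A.card + (T \ A).card := by omega
    _ = (T ∪ A).card := by
        rw [add_comm]; exact Finset.card_sdiff_add_card T A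
    _ = (A ∪ T).card := by rw [Finset.union_comm]
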